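/- arXiv:1509.07641 — 9 statements merged into one kernel-verified Lean document; each statement's English description precedes it below -/
import Mathlib

section
/- For any integers m, n with 2 ≤ m ≤ n, the complete bipartite graph K_{m,n} admits no closed distance magic labeling. -/
open Finset SimpleGraph

/-- A closed distance magic labeling of a graph `G` on `n` vertices: a bijection
from the vertices to `{1, …, n}` (encoded via `V ≃ Fin n`, with label `ℓ y + 1`)
such that the sum of labels over every closed neighborhood is the constant `k`. -/
def IsClosedDistanceMagicWith {V : Type*} [Fintype V] [DecidableEq V]
    (G : SimpleGraph V) [DecidableRel G.Adj] (k : ℕ) : Prop :=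
  0 < k ∧ ∃ ℓ : V ≃ Fin (Fintype.card V),
    ∀ x : V, ∑ y ∈ insert x (G.neighborFinset x), ((ℓ y : ℕ) + 1) = k

/-- A graph admitting a closed distance magic labeling. -/
def IsClosedDistanceMagic {V : Type*} [Fintype V] [DecidableEq V]
    (G : SimpleGraph V) [DecidableRel G.Adj] : Prop :=
  ∃ k : ℕ, IsClosedDistanceMagicWith G k


instance (m n : ℕ) : DecidableRel (completeBipartiteGraph (Fin m) (Fin n)).Adj := fun x y => by
  cases x <;> cases y <;> simp [completeBipartiteGraph] <;> infer_instance

theorem stmt_3 (m n : ℕ) (hm : 2 ≤ m) (hmn : m ≤ n) :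
    ¬ IsClosedDistanceMagic (completeBipartiteGraph (Fin m) (Fin n)) := by
  rintro ⟨k, -, ℓ, hℓ⟩
  set G := completeBipartiteGraph (Fin m) (Fin n) with hG
  have hN : ∀ a : Fin m, G.neighborFinset (Sum.inl a)
      = (univ : Finset (Fin n)).map ⟨Sum.inr, Sum.inr_injective⟩ := by
    intro a; ext y; cases y <;> simp [mem_neighborFinset, hG]
  have key : ∀ a : Fin m, ((ℓ (Sum.inl a) : ℕ) + 1)
      + ∑ y ∈ (univ : Finset (Fin n)).map ⟨Sum.inr, Sum.inr_injective⟩,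
          ((ℓ y : ℕ) + 1) = k := by
    intro a
    rw [← hℓ (Sum.inl a), ← hN a, sum_insert (G.notMem_neighborFinset_self _)]
  have h01 := (key ⟨0, by omega⟩).trans (key ⟨1, by omega⟩).symm
  have hval : (ℓ (Sum.inl ⟨0, by omega⟩) : ℕ) = ℓ (Sum.inl ⟨1, by omega⟩) := by omega
  have := Sum.inl_injective (ℓ.injective (Fin.ext hval))
  simp [Fin.ext_iff] at this
end

section
/- If a connected strongly regular graph G on n vertices admits a closed distance magic labeling, then G is isomorphic to the complete graph K_n. -/
open Finset SimpleGraph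

lemma card_inter_common {V : Type*} [Fintype V] [DecidableEq V]
    (G : SimpleGraph V) [DecidableRel G.Adj] (v w : V) :
    (G.neighborFinset v ∩ G.neighborFinset w).card =
      Fintype.card (G.commonNeighbors v w) := by
  rw [← Set.toFinset_card]
  congr 1
  ext z
  simp [mem_commonNeighbors]

theorem stmt_6 {V : Type*} [Fintype V] [DecidableEq V]
    (G : SimpleGraph V) [DecidableRel G.Adj] (n r a b : ℕ)
    (hn : Fintype.card V = n) (hconn : G.Connected)
    (hsrg : G.IsSRGWith n r a b) (hb : 1 ≤ b)
    (hmagic : IsClosedDistanceMagic G) :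
    Nonempty (G ≃g (⊤ : SimpleGraph (Fin n))) := by
  classical
  obtain ⟨k, hk0, ℓ, hℓ⟩ := hmagic
  suffices hadj : ∀ x y : V, x ≠ y → G.Adj x y by
    have hGtop : G = ⊤ := by
      ext x y
      exact ⟨fun h => h.ne, fun h => hadj x y h.ne⟩
    subst hn
    rw [hGtop]
    exact ⟨Iso.completeGraph (Fintype.equivFin V)⟩
  intro x0 y0 hxy0
  -- n ≥ 2
  have hn2 : 2 ≤ n := by
    rw [← hn]
    have : Nontrivial V := ⟨x0, y0, hxy0⟩
    exact Fintype.one_lt_card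
  -- the label function
  set L : V → ℕ := fun v => (ℓ v : ℕ) + 1 with hL
  -- total sum of labels
  have hS : (∑ v : V, L v) * 2 = n * (n + 1) := by
    have h1 : (∑ v : V, L v) = ∑ i : Fin (Fintype.card V), ((i : ℕ) + 1) :=
      (Equiv.sum_comp ℓ (fun i => (i : ℕ) + 1))
    rw [h1, Fin.sum_univ_eq_sum_range (fun i => i + 1), hn]
    have h2 : ∑ i ∈ Finset.range n, (i + 1) = ∑ i ∈ Finset.range (n + 1), i := by
      rw [Finset.sum_range_succ_comm]
      simp [Finset.sum_add_distrib]
      omega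
    rw [h2, Finset.sum_range_id_mul_two (n + 1)]
    simp [Nat.mul_comm]
  -- closed neighborhood cardinality
  have hcardN : ∀ v : V, (insert v (G.neighborFinset v)).card = r + 1 := by
    intro v
    rw [Finset.card_insert_of_notMem (notMem_neighborFinset_self G v),
      card_neighborFinset_eq_degree, hsrg.regular v]
  -- double counting: 2 * k = (r+1) * (n+1)
  have hswap : ∑ x : V, ∑ y ∈ insert x (G.neighborFinset x), L y
      = ∑ y : V, ∑ x ∈ insert y (G.neighborFinset y), L y := by
    apply Finset.sum_comm'
    intro x y
    simp only [Finset.mem_univ, true_and, and_true, Finset.mem_insert,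
      mem_neighborFinset]
    constructor
    · rintro (rfl | h)
      · exact Or.inl rfl
      · exact Or.inr h.symm
    · rintro (rfl | h)
      · exact Or.inl rfl
      · exact Or.inr h.symm
  have hk2 : 2 * k = (r + 1) * (n + 1) := by
    have h1 : ∑ x : V, ∑ y ∈ insert x (G.neighborFinset x), L y = n * k := by
      rw [Finset.sum_congr rfl (fun x _ => hℓ x)]
      simp [hn, Nat.mul_comm]
    have h2 : ∑ y : V, ∑ x ∈ insert y (G.neighborFinset y), L y
        = (r + 1) * ∑ v : V, L v := by
      rw [Finset.mul_sum]
      refine Finset.sum_congr rfl (fun y _ => ?_)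
      rw [Finset.sum_const, hcardN y, smul_eq_mul]
    have h3 : n * k = (r + 1) * ∑ v : V, L v := by rw [← h1, hswap, h2]
    have h4 : n * (2 * k) = n * ((r + 1) * (n + 1)) := by
      calc n * (2 * k) = 2 * (n * k) := by ring
        _ = 2 * ((r + 1) * ∑ v : V, L v) := by rw [h3]
        _ = (r + 1) * ((∑ v : V, L v) * 2) := by ring
        _ = (r + 1) * (n * (n + 1)) := by rw [hS]
        _ = n * ((r + 1) * (n + 1)) := by ring
    exact Nat.eq_of_mul_eq_mul_left (by omega) h4
  -- the centered labeling
  set g : V → ℤ := fun v => 2 * (L v : ℤ) - (n + 1) with hg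
  -- closed neighborhood sums of g vanish
  have hg0 : ∀ v : V, ∑ z ∈ insert v (G.neighborFinset v), g z = 0 := by
    intro v
    have : ∑ z ∈ insert v (G.neighborFinset v), g z
        = 2 * ((∑ z ∈ insert v (G.neighborFinset v), L z : ℕ) : ℤ)
          - ((insert v (G.neighborFinset v)).card : ℤ) * (n + 1) := by
      rw [Finset.sum_sub_distrib, Finset.sum_const, nsmul_eq_mul, Nat.cast_sum,
        Finset.mul_sum]
    rw [this, hℓ v, hcardN v]
    have : (2 * k : ℤ) = ((r : ℤ) + 1) * ((n : ℤ) + 1) := by exact_mod_cast hk2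
    push_cast
    linarith
  have hNsum : ∀ v : V, ∑ z ∈ G.neighborFinset v, g z = -g v := by
    intro v
    have := hg0 v
    rw [Finset.sum_insert (notMem_neighborFinset_self G v)] at this
    linarith
  -- total sum of g vanishes
  have hT : ∑ v : V, g v = 0 := by
    have : ∑ v : V, g v = 2 * ((∑ v : V, L v : ℕ) : ℤ) - (Fintype.card V : ℤ) * (n + 1) := by
      rw [Finset.sum_sub_distrib, Finset.sum_const, nsmul_eq_mul, Nat.cast_sum,
        Finset.mul_sum, Finset.card_univ]
    rw [this, hn]
    have hS' : ((∑ v : V, L v : ℕ) : ℤ) * 2 = (n : ℤ) * (n + 1) := by exact_mod_cast hS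
    linarith
  -- key identity: (r - a - 1) * g x = 0 for all x
  have hkey : ∀ x : V, ((r : ℤ) - a - 1) * g x = 0 := by
    intro x
    set c : V → ℕ := fun z => (G.neighborFinset x ∩ G.neighborFinset z).card with hc
    have hD : ∑ y ∈ G.neighborFinset x, ∑ z ∈ G.neighborFinset y, g z
        = ∑ z : V, (c z : ℤ) * g z := by
      have h1 : ∀ y : V, ∑ z ∈ G.neighborFinset y, g z
          = ∑ z : V, if G.Adj y z then g z else 0 := by
        intro y
        rw [neighborFinset_eq_filter, Finset.sum_filter]
      calc ∑ y ∈ G.neighborFinset x, ∑ z ∈ G.neighborFinset y, g z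
          = ∑ y ∈ G.neighborFinset x, ∑ z : V, (if G.Adj y z then g z else 0) := by
            exact Finset.sum_congr rfl (fun y _ => h1 y)
        _ = ∑ z : V, ∑ y ∈ G.neighborFinset x, (if G.Adj y z then g z else 0) :=
            Finset.sum_comm
        _ = ∑ z : V, (c z : ℤ) * g z := by
            refine Finset.sum_congr rfl (fun z _ => ?_)
            rw [← Finset.sum_filter, Finset.sum_const, nsmul_eq_mul]
            have hfe : Finset.filter (fun y => G.Adj y z) (G.neighborFinset x)
                = G.neighborFinset x ∩ G.neighborFinset z := by
              ext y
              simp only [Finset.mem_filter, Finset.mem_inter, mem_neighborFinset]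
              exact and_congr_right (fun _ => ⟨fun h => h.symm, fun h => h.symm⟩)
            rw [hfe]
    -- evaluate the double sum directly
    have hDval : ∑ y ∈ G.neighborFinset x, ∑ z ∈ G.neighborFinset y, g z = g x := by
      rw [Finset.sum_congr rfl (fun y _ => hNsum y), Finset.sum_neg_distrib, hNsum x]
      ring
    -- counts
    have hcx : c x = r := by
      simp only [hc, Finset.inter_self]
      rw [card_neighborFinset_eq_degree, hsrg.regular x]
    have hca : ∀ z ∈ G.neighborFinset x, c z = a := by
      intro z hz
      show (G.neighborFinset x ∩ G.neighborFinset z).card = a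
      rw [card_inter_common, hsrg.of_adj x z ((mem_neighborFinset G x z).mp hz)]
    have hcb : ∀ z ∈ (Finset.univ : Finset V) \ insert x (G.neighborFinset x), c z = b := by
      intro z hz
      simp only [Finset.mem_sdiff, Finset.mem_univ, true_and, Finset.mem_insert,
        mem_neighborFinset, not_or] at hz
      show (G.neighborFinset x ∩ G.neighborFinset z).card = b
      rw [card_inter_common]
      exact hsrg.of_not_adj (fun h => hz.1 h.symm) hz.2
    -- split the sum
    have hsplit : ∑ z : V, (c z : ℤ) * g z
        = (∑ z ∈ insert x (G.neighborFinset x), (c z : ℤ) * g z)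
          + ∑ z ∈ (Finset.univ : Finset V) \ insert x (G.neighborFinset x),
              (c z : ℤ) * g z := by
      rw [add_comm, Finset.sum_sdiff (Finset.subset_univ _)]
    have houtside : ∑ z ∈ (Finset.univ : Finset V) \ insert x (G.neighborFinset x),
        (c z : ℤ) * g z = 0 := by
      rw [Finset.sum_congr rfl (fun z hz => by rw [hcb z hz])]
      rw [← Finset.mul_sum]
      have : ∑ z ∈ (Finset.univ : Finset V) \ insert x (G.neighborFinset x), g z = 0 := by
        have h := Finset.sum_sdiff (f := g) (Finset.subset_univ (insert x (G.neighborFinset x)))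
        rw [hg0 x] at h
        rw [← hT]
        linarith [h]
      rw [this, mul_zero]
    have hinside : ∑ z ∈ insert x (G.neighborFinset x), (c z : ℤ) * g z
        = (r : ℤ) * g x - (a : ℤ) * g x := by
      rw [Finset.sum_insert (notMem_neighborFinset_self G x), hcx,
        Finset.sum_congr rfl (fun z hz => by rw [hca z hz]), ← Finset.mul_sum, hNsum x]
      ring
    have hfin := hDval
    rw [hD, hsplit, houtside, hinside, add_zero] at hfin
    linarith
  -- there is a vertex with g ≠ 0, hence r = a + 1
  have hra : r = a + 1 := by
    have hpos : 0 < Fintype.card V := by omega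
    set v0 : V := ℓ.symm ⟨0, hpos⟩ with hv0
    have hgv0 : g v0 = 1 - (n : ℤ) := by
      simp only [hg, hL, hv0, Equiv.apply_symm_apply]
      push_cast
      ring
    have hne : g v0 ≠ 0 := by
      rw [hgv0]
      intro h
      have : (n : ℤ) = 1 := by linarith
      have : n = 1 := by exact_mod_cast this
      omega
    have := hkey v0
    have hz : (r : ℤ) - a - 1 = 0 := by
      rcases mul_eq_zero.mp this with h | h
      · exact h
      · exact absurd h hne
    have : (r : ℤ) = (a : ℤ) + 1 := by linarith
    exact_mod_cast this
  -- adjacent vertices have equal closed neighborhoods (in the relevant sense)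
  have hstep : ∀ u v w : V, G.Adj u v → G.Adj u w → w = v ∨ G.Adj v w := by
    intro u v w huv huw
    by_cases hwv : w = v
    · exact Or.inl hwv
    right
    have hcard : (G.neighborFinset u ∩ G.neighborFinset v).card = a := by
      rw [card_inter_common, hsrg.of_adj u v huv]
    have hsub : G.neighborFinset u ∩ G.neighborFinset v
        ⊆ (G.neighborFinset u).erase v := by
      intro z hz
      rw [Finset.mem_inter] at hz
      refine Finset.mem_erase.mpr ⟨?_, hz.1⟩
      intro h
      rw [h] at hz
      exact notMem_neighborFinset_self G v hz.2
    have hcard2 : ((G.neighborFinset u).erase v).card = a := by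
      rw [Finset.card_erase_of_mem ((mem_neighborFinset G u v).mpr huv),
        card_neighborFinset_eq_degree, hsrg.regular u, hra]
      simp
    have heq : G.neighborFinset u ∩ G.neighborFinset v
        = (G.neighborFinset u).erase v :=
      Finset.eq_of_subset_of_card_le hsub (by rw [hcard, hcard2])
    have hw : w ∈ (G.neighborFinset u).erase v :=
      Finset.mem_erase.mpr ⟨hwv, (mem_neighborFinset G u w).mpr huw⟩
    rw [← heq, Finset.mem_inter, mem_neighborFinset, mem_neighborFinset] at hw
    exact hw.2
  -- propagate along walks
  have hwalk : ∀ {x y : V}, G.Walk x y → x = y ∨ G.Adj x y := by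
    intro x y p
    induction p with
    | nil => exact Or.inl rfl
    | @cons x u y h p ih =>
      rcases ih with rfl | huy
      · exact Or.inr h
      · rcases hstep u x y h.symm huy with rfl | hxy
        · exact Or.inl rfl
        · exact Or.inr hxy
  obtain ⟨p⟩ := hconn.preconnected x0 y0
  rcases hwalk p with rfl | hadj
  · exact absurd rfl hxy0
  · exact hadj
end

section
/- The only cycle admitting a closed distance magic labeling is C_3. -/
open Finset SimpleGraph

theorem stmt_9 (n : ℕ) (hn : 3 ≤ n) :
    IsClosedDistanceMagic (cycleGraph n) ↔ n = 3 := by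
  constructor
  · rintro ⟨k, hk0, ℓ, hℓ⟩
    by_contra hne
    obtain ⟨m, rfl⟩ : ∃ m, n = m + 4 := ⟨n - 4, by omega⟩
    clear hn hne
    have val2 : ((2 : Fin (m+4)) : ℕ) = 2 := by
      rw [show ((2 : Fin (m+4)) : ℕ) = 2 % (m+4) from rfl, Nat.mod_eq_of_lt (by omega)]
    have val3 : ((3 : Fin (m+4)) : ℕ) = 3 := by
      rw [show ((3 : Fin (m+4)) : ℕ) = 3 % (m+4) from rfl, Nat.mod_eq_of_lt (by omega)]
    have hsum : ∀ x : Fin (m+4),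
        ((ℓ (x-1) : ℕ) + 1) + ((ℓ x : ℕ) + 1) + ((ℓ (x+1) : ℕ) + 1) = k := by
      intro x
      have h1 : x ∉ ({x - 1, x + 1} : Finset (Fin (m+4))) := by
        simp only [Finset.mem_insert, Finset.mem_singleton]
        push_neg
        constructor
        · intro hx; rw [eq_comm, sub_eq_self] at hx
          exact absurd (congrArg Fin.val hx) (by simp [Fin.val_one])
        · intro hx; rw [left_eq_add] at hx
          exact absurd (congrArg Fin.val hx) (by simp [Fin.val_one])
      have h2 : (x - 1 : Fin (m+4)) ≠ x + 1 := by
        intro hx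
        rw [sub_eq_iff_eq_add, add_assoc, show (1 + 1 : Fin (m+4)) = 2 by ext; simp [Fin.val_add]] at hx
        have h2v := congrArg Fin.val (left_eq_add.mp hx)
        rw [val2, Fin.val_zero] at h2v
        omega
      have := hℓ x
      rw [show (cycleGraph (m+4)).neighborFinset x = {x - 1, x + 1} from
        cycleGraph_neighborFinset (n := m + 2), Finset.sum_insert h1,
        Finset.sum_pair h2] at this
      omega
    have key : ℓ (0 : Fin (m+4)) = ℓ 3 := by
      have e1 := hsum 1
      have e2 := hsum 2
      rw [show (1 - 1 : Fin (m+4)) = 0 by norm_num,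
        show (1 + 1 : Fin (m+4)) = 2 by ext; simp [Fin.val_add]] at e1
      rw [show (2 - 1 : Fin (m+4)) = 1 by rw [sub_eq_iff_eq_add]; ext; simp [Fin.val_add],
        show (2 + 1 : Fin (m+4)) = 3 by ext; simp [Fin.val_add]] at e2
      exact Fin.val_injective (by omega)
    have h03 := congrArg Fin.val (ℓ.injective key)
    rw [Fin.val_zero, val3] at h03
    omega
  · rintro rfl
    exact ⟨6, by norm_num, finCongr (Fintype.card_fin 3).symm, by decide⟩
end

section
/- For every positive integer m with m ≡ 3 (mod 6), the set {1,...,m} can be partitioned into m/3 pairwise disjoint triples each having element sum 3(m+1)/2. -/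
open Finset

theorem stmt_11 (m : ℕ) (hm : 0 < m) (h : m % 6 = 3) :
    ∃ T : Finset (Finset ℕ),
      T.card = m / 3 ∧
      (∀ t ∈ T, t.card = 3 ∧ ∑ x ∈ t, x = 3 * (m + 1) / 2) ∧
      (T : Set (Finset ℕ)).PairwiseDisjoint id ∧
      T.biUnion id = Finset.Icc 1 m := by
  obtain ⟨k, rfl⟩ : ∃ k, m = 6 * k + 3 := ⟨m / 6, by omega⟩
  set f : ℕ → Finset ℕ := fun l =>
    if l ≤ k then {l, 3*k+2+l, 6*k+4-2*l} else {l, k+1+l, 8*k+5-2*l} with hf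
  have hmem : ∀ l x, x ∈ f l ↔
      (l ≤ k ∧ (x = l ∨ x = 3*k+2+l ∨ x = 6*k+4-2*l)) ∨
      (k < l ∧ (x = l ∨ x = k+1+l ∨ x = 8*k+5-2*l)) := by
    intro l x
    simp only [hf]
    split <;> simp <;> omega
  have hinj : Set.InjOn f (Finset.Icc 1 (2*k+1)) := by
    intro a ha b hb hab
    simp only [Finset.coe_Icc, Set.mem_Icc] at ha hb
    have h1 : a ∈ f a := by rw [hmem]; omega
    rw [hab, hmem] at h1
    omega
  have hdisj : ∀ a ∈ Finset.Icc 1 (2*k+1), ∀ b ∈ Finset.Icc 1 (2*k+1),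
      a ≠ b → Disjoint (f a) (f b) := by
    intro a ha b hb hab
    rw [Finset.mem_Icc] at ha hb
    rw [Finset.disjoint_left]
    intro x hx hx'
    rw [hmem] at hx hx'
    omega
  refine ⟨(Finset.Icc 1 (2*k+1)).image f, ?_, ?_, ?_, ?_⟩
  · rw [Finset.card_image_of_injOn hinj, Nat.card_Icc]; omega
  · intro t ht
    rw [Finset.mem_image] at ht
    obtain ⟨l, hl, rfl⟩ := ht
    rw [Finset.mem_Icc] at hl
    simp only [hf]
    split
    · constructor
      · rw [Finset.card_insert_of_notMem (by simp; omega),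
          Finset.card_insert_of_notMem (by simp; omega), Finset.card_singleton]
      · rw [Finset.sum_insert (by simp; omega), Finset.sum_insert (by simp; omega),
          Finset.sum_singleton]
        omega
    · constructor
      · rw [Finset.card_insert_of_notMem (by simp; omega),
          Finset.card_insert_of_notMem (by simp; omega), Finset.card_singleton]
      · rw [Finset.sum_insert (by simp; omega), Finset.sum_insert (by simp; omega),
          Finset.sum_singleton]
        omega
  · intro a ha b hb hab
    simp only [Finset.coe_image, Set.mem_image, Finset.mem_coe] at ha hb
    obtain ⟨la, hla, rfl⟩ := ha
    obtain ⟨lb, hlb, rfl⟩ := hb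
    have : la ≠ lb := fun hh => hab (by rw [hh])
    exact hdisj la hla lb hlb this
  · have hcard3 : ∀ l ∈ Finset.Icc 1 (2*k+1), (f l).card = 3 := by
      intro l hl
      simp only [hf]
      split
      · rw [Finset.card_insert_of_notMem (by simp; omega),
          Finset.card_insert_of_notMem (by simp; omega), Finset.card_singleton]
      · rw [Finset.mem_Icc] at hl
        rw [Finset.card_insert_of_notMem (by simp; omega),
          Finset.card_insert_of_notMem (by simp; omega), Finset.card_singleton]
    have hbu : ((Finset.Icc 1 (2*k+1)).image f).biUnion id
        = (Finset.Icc 1 (2*k+1)).biUnion f := by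
      ext x
      simp only [Finset.mem_biUnion, Finset.mem_image, id]
      constructor
      · rintro ⟨t, ⟨l, hl, rfl⟩, hx⟩; exact ⟨l, hl, hx⟩
      · rintro ⟨l, hl, hx⟩; exact ⟨f l, ⟨l, hl, rfl⟩, hx⟩
    rw [hbu]
    have hsub : (Finset.Icc 1 (2*k+1)).biUnion f ⊆ Finset.Icc 1 (6*k+3) := by
      intro x hx
      rw [Finset.mem_biUnion] at hx
      obtain ⟨l, hl, hx⟩ := hx
      rw [Finset.mem_Icc] at hl
      rw [hmem] at hx
      rw [Finset.mem_Icc]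
      omega
    apply Finset.eq_of_subset_of_card_le hsub
    rw [Finset.card_biUnion hdisj, Finset.sum_congr rfl hcard3, Finset.sum_const,
      Nat.card_Icc, Nat.card_Icc, smul_eq_mul]
    omega
end

section
/- If m ≡ 3 (mod 6) and n ≡ 3 (mod 6), then the strong product C_m ⊠ C_n admits a closed distance magic labeling. -/
open Finset SimpleGraph

/-- The strong product of two simple graphs. -/
def strongProd {α β : Type*} (G : SimpleGraph α) (H : SimpleGraph β) :
    SimpleGraph (α × β) where
  Adj p q := p ≠ q ∧ (p.1 = q.1 ∨ G.Adj p.1 q.1) ∧ (p.2 = q.2 ∨ H.Adj p.2 q.2)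
  symm := ⟨by
    rintro p q ⟨h1, h2, h3⟩
    exact ⟨h1.symm, h2.elim (fun e => Or.inl e.symm) (fun a => Or.inr a.symm),
      h3.elim (fun e => Or.inl e.symm) (fun a => Or.inr a.symm)⟩⟩
  loopless := ⟨fun p h => h.1 rfl⟩

instance {α β : Type*} [DecidableEq α] [DecidableEq β] (G : SimpleGraph α)
    (H : SimpleGraph β) [DecidableRel G.Adj] [DecidableRel H.Adj] :
    DecidableRel (strongProd G H).Adj := fun p q =>
  inferInstanceAs (Decidable (p ≠ q ∧ (p.1 = q.1 ∨ G.Adj p.1 q.1) ∧ (p.2 = q.2 ∨ H.Adj p.2 q.2)))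

/-! ### Auxiliary construction -/

private def sg (t u : ℕ) : ℕ := if u ≤ t then u + t else u - t - 1

/-- The `r`-th element of the `u`-th triple in a partition of `{1,…,6t+3}` into
triples of equal sum `9t+6`. -/
private def trip (t u r : ℕ) : ℕ :=
  if r = 0 then 3*t+1 - (u + sg t u) else if r = 1 then 2*t+2+u else 4*t+3 + sg t u

private lemma trip_bounds (t u r : ℕ) (hu : u ≤ 2*t) :
    1 ≤ trip t u r ∧ trip t u r ≤ 6*t+3 := by
  unfold trip sg; split_ifs <;> omega

private lemma trip_inj {t u u' r r' : ℕ} (hu : u ≤ 2*t) (hu' : u' ≤ 2*t)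
    (hr : r < 3) (hr' : r' < 3) (h : trip t u r = trip t u' r') : u = u' ∧ r = r' := by
  unfold trip sg at h; split_ifs at h <;> omega

private lemma tripP3 (t c r : ℕ) (hc : c ≤ 2*t) :
    (trip t c ((r+2)%3) - 1) + ((trip t c (r%3) - 1) + (trip t c ((r+1)%3) - 1)) = 9*t+3 := by
  have h3 : r % 3 = 0 ∨ r % 3 = 1 ∨ r % 3 = 2 := by omega
  rcases h3 with h|h|h <;>
    rw [show (r+2)%3 = (r%3+2)%3 by omega, show (r+1)%3 = (r%3+1)%3 by omega, h] <;>
    norm_num [trip, sg] <;> split_ifs <;> omega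

private lemma tripQ3 (t c r : ℕ) (hc : c ≤ 2*t) :
    trip t c ((r+2)%3) + (trip t c (r%3) + trip t c ((r+1)%3)) = 9*t+6 := by
  have h3 : r % 3 = 0 ∨ r % 3 = 1 ∨ r % 3 = 2 := by omega
  rcases h3 with h|h|h <;>
    rw [show (r+2)%3 = (r%3+2)%3 by omega, show (r+1)%3 = (r%3+1)%3 by omega, h] <;>
    norm_num [trip, sg] <;> split_ifs <;> omega

private def lab (t w i j : ℕ) : ℕ :=
  (6*w+1+2) * (trip t (i/3) (j%3) - 1) + (trip w (j/3) (i%3) - 1)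

private lemma lab_lt (t w i j : ℕ) (hi : i < 6*t+1+2) (hj : j < 6*w+1+2) :
    lab t w i j < (6*t+1+2) * (6*w+1+2) := by
  have h1 := trip_bounds t (i/3) (j%3) (by omega)
  have h2 := trip_bounds w (j/3) (i%3) (by omega)
  have h3 : (6*w+1+2) * (trip t (i/3) (j%3) - 1) ≤ (6*w+1+2) * (6*t+2) :=
    Nat.mul_le_mul_left _ (by omega)
  have h4 : (6*t+1+2) * (6*w+1+2) = (6*w+1+2) * (6*t+2) + (6*w+3) := by ring
  unfold lab
  omega

private lemma lab_inj (t w i j i' j' : ℕ) (hi : i < 6*t+1+2) (hj : j < 6*w+1+2)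
    (hi' : i' < 6*t+1+2) (hj' : j' < 6*w+1+2) (h : lab t w i j = lab t w i' j') :
    i = i' ∧ j = j' := by
  have hP := trip_bounds t (i/3) (j%3) (by omega)
  have hQ := trip_bounds w (j/3) (i%3) (by omega)
  have hP' := trip_bounds t (i'/3) (j'%3) (by omega)
  have hQ' := trip_bounds w (j'/3) (i'%3) (by omega)
  have hd : ∀ a b : ℕ, b < 6*w+1+2 → ((6*w+1+2) * a + b) / (6*w+1+2) = a := by
    intro a b hb
    rw [Nat.mul_add_div (by omega), Nat.div_eq_of_lt hb, Nat.add_zero]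
  unfold lab at h
  have e1 := hd (trip t (i/3) (j%3) - 1) (trip w (j/3) (i%3) - 1) (by omega)
  have e2 := hd (trip t (i'/3) (j'%3) - 1) (trip w (j'/3) (i'%3) - 1) (by omega)
  rw [h] at e1
  rw [e2] at e1
  -- e1 : trip t (i'/3) (j'%3) - 1 = trip t (i/3) (j%3) - 1
  have eP : trip t (i/3) (j%3) = trip t (i'/3) (j'%3) := by omega
  have eQ : trip w (j/3) (i%3) = trip w (j'/3) (i'%3) := by
    rw [eP] at h; omega
  obtain ⟨ha, hb⟩ := trip_inj (t := t) (by omega) (by omega) (by omega) (by omega) eP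
  obtain ⟨hc, hdd⟩ := trip_inj (t := w) (by omega) (by omega) (by omega) (by omega) eQ
  omega

private lemma mod_two_cases (a k : ℕ) (h : a < 2*k) : a % k = a ∨ a % k + k = a := by
  rcases Nat.lt_or_ge a k with h'|h'
  · exact Or.inl (Nat.mod_eq_of_lt h')
  · right; rw [Nat.mod_eq_sub_mod h', Nat.mod_eq_of_lt (by omega)]; omega

private lemma val_sub_one {k : ℕ} (j : Fin (k+1+2)) :
    (j - 1).val = j.val + (k+2) ∨ (j - 1).val + (k+3) = j.val + (k+2) := by
  have h1 : ((1 : Fin (k+1+2))).val = 1 := rfl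
  have e : (j - 1).val = (k+1+2 - (1 : Fin (k+1+2)).val + j.val) % (k+1+2) := by
    rw [Fin.sub_def]
  rw [h1] at e
  have := mod_two_cases (k+1+2-1 + j.val) (k+1+2) (by have := j.isLt; omega)
  omega

private lemma val_add_one {k : ℕ} (j : Fin (k+1+2)) :
    (j + 1).val = j.val + 1 ∨ (j + 1).val + (k+3) = j.val + 1 := by
  have h1 : ((1 : Fin (k+1+2))).val = 1 := rfl
  have e : (j + 1).val = (j.val + (1 : Fin (k+1+2)).val) % (k+1+2) := by rw [Fin.add_def]
  rw [h1] at e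
  have := mod_two_cases (j.val + 1) (k+1+2) (by have := j.isLt; omega)
  omega

private lemma sum3gen {k : ℕ} (f : ℕ → ℕ) (K : ℕ) (j : Fin (6*k+1+2))
    (hf : ∀ r, f ((r+2)%3) + (f (r%3) + f ((r+1)%3)) = K) :
    ∑ b ∈ ({j-1, j, j+1} : Finset (Fin (6*k+1+2))), f (b.val % 3) = K := by
  have hs := val_sub_one j
  have ha := val_add_one j
  have hjv := j.isLt
  have hsv := (j-1).isLt
  have hav := (j+1).isLt
  have d1 : j - 1 ≠ j := Fin.ne_of_val_ne (by omega)
  have d2 : j - 1 ≠ j + 1 := Fin.ne_of_val_ne (by omega)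
  have d3 : j ≠ j + 1 := Fin.ne_of_val_ne (by omega)
  rw [Finset.sum_insert (by simp [d1, d2]), Finset.sum_insert (by simp [d3]),
    Finset.sum_singleton]
  rw [show (j-1).val % 3 = (j.val + 2) % 3 by omega,
    show (j+1).val % 3 = (j.val + 1) % 3 by omega]
  exact hf j.val

private lemma cyc_mem {k : ℕ} (u v : Fin (k+1+2)) :
    (u = v ∨ (cycleGraph (k+1+2)).Adj u v) ↔
      v ∈ ({u - 1, u, u + 1} : Finset (Fin (k+1+2))) := by
  have hsub : ∀ a b : Fin (k+1+2), a - b = 1 ↔ b = a - 1 := by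
    intro a b
    constructor
    · intro h; rw [← h]; abel
    · intro h; rw [h]; abel
  rw [cycleGraph_adj]
  simp only [Finset.mem_insert, Finset.mem_singleton]
  rw [hsub u v, hsub v u]
  constructor
  · rintro (h | h | h)
    · exact Or.inr (Or.inl h.symm)
    · exact Or.inl h
    · right; right; rw [h]; abel
  · rintro (h | h | h)
    · exact Or.inr (Or.inl h)
    · exact Or.inl h.symm
    · right; right; rw [h]; abel

private lemma nbhd_eq {k l : ℕ} (x : Fin (k+1+2) × Fin (l+1+2)) :
    insert x ((strongProd (cycleGraph (k+1+2)) (cycleGraph (l+1+2))).neighborFinset x)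
      = ({x.1 - 1, x.1, x.1 + 1} : Finset (Fin (k+1+2)))
        ×ˢ ({x.2 - 1, x.2, x.2 + 1} : Finset (Fin (l+1+2))) := by
  ext y
  have hadj : (strongProd (cycleGraph (k+1+2)) (cycleGraph (l+1+2))).Adj x y ↔
      (x ≠ y ∧ (x.1 = y.1 ∨ (cycleGraph (k+1+2)).Adj x.1 y.1)
        ∧ (x.2 = y.2 ∨ (cycleGraph (l+1+2)).Adj x.2 y.2)) := Iff.rfl
  rw [Finset.mem_insert, SimpleGraph.mem_neighborFinset, hadj, Finset.mem_product,
    ← cyc_mem x.1 y.1, ← cyc_mem x.2 y.2]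
  constructor
  · rintro (rfl | ⟨-, h1, h2⟩)
    · exact ⟨Or.inl rfl, Or.inl rfl⟩
    · exact ⟨h1, h2⟩
  · rintro ⟨h1, h2⟩
    by_cases hxy : x = y
    · exact Or.inl hxy.symm
    · exact Or.inr ⟨hxy, h1, h2⟩

private def Fmap (t w : ℕ) (y : Fin (6*t+1+2) × Fin (6*w+1+2)) :
    Fin ((6*t+1+2) * (6*w+1+2)) :=
  ⟨lab t w y.1.val y.2.val, lab_lt t w _ _ y.1.isLt y.2.isLt⟩

private lemma Fmap_bij (t w : ℕ) : Function.Bijective (Fmap t w) := by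
  rw [Fintype.bijective_iff_injective_and_card]
  constructor
  · rintro ⟨a, b⟩ ⟨a', b'⟩ hF
    have h : lab t w a.val b.val = lab t w a'.val b'.val := congrArg Fin.val hF
    obtain ⟨h1, h2⟩ := lab_inj t w _ _ _ _ a.isLt b.isLt a'.isLt b'.isLt h
    exact Prod.ext (Fin.ext h1) (Fin.ext h2)
  · simp

theorem stmt_12 (m n : ℕ) (hm : m % 6 = 3) (hn : n % 6 = 3) :
    IsClosedDistanceMagic (strongProd (cycleGraph m) (cycleGraph n)) := by
  obtain ⟨t, rfl⟩ : ∃ t, m = 6*t+1+2 := ⟨m/6, by omega⟩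
  obtain ⟨w, rfl⟩ : ∃ w, n = 6*w+1+2 := ⟨n/6, by omega⟩
  refine ⟨3*((6*w+1+2)*(9*t+3)) + 3*(9*w+6), by positivity, ?_⟩
  have hcard : (6*t+1+2) * (6*w+1+2) = Fintype.card (Fin (6*t+1+2) × Fin (6*w+1+2)) := by
    simp
  refine ⟨(Equiv.ofBijective (Fmap t w) (Fmap_bij t w)).trans (finCongr hcard), fun x => ?_⟩
  have hval : ∀ y : Fin (6*t+1+2) × Fin (6*w+1+2),
      ((((Equiv.ofBijective (Fmap t w) (Fmap_bij t w)).trans (finCongr hcard)) y : ℕ))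
        = lab t w y.1.val y.2.val := fun y => rfl
  rw [nbhd_eq x]
  have hterm : ∀ y ∈ (({x.1-1, x.1, x.1+1} : Finset (Fin (6*t+1+2)))
      ×ˢ ({x.2-1, x.2, x.2+1} : Finset (Fin (6*w+1+2)))),
      ((((Equiv.ofBijective (Fmap t w) (Fmap_bij t w)).trans (finCongr hcard)) y : ℕ) + 1)
        = (6*w+1+2) * (trip t (y.1.val/3) (y.2.val%3) - 1)
          + trip w (y.2.val/3) (y.1.val%3) := by
    intro y _
    rw [hval y]
    have hQ := trip_bounds w (y.2.val/3) (y.1.val%3) (by have := y.2.isLt; omega)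
    unfold lab
    omega
  rw [Finset.sum_congr rfl hterm, Finset.sum_add_distrib, Finset.sum_product,
    Finset.sum_product_right]
  have hA : ∑ a ∈ ({x.1-1, x.1, x.1+1} : Finset (Fin (6*t+1+2))),
      ∑ b ∈ ({x.2-1, x.2, x.2+1} : Finset (Fin (6*w+1+2))),
        (6*w+1+2) * (trip t (a.val/3) (b.val%3) - 1) = 3*((6*w+1+2)*(9*t+3)) := by
    have h1 : ∀ a ∈ ({x.1-1, x.1, x.1+1} : Finset (Fin (6*t+1+2))),
        ∑ b ∈ ({x.2-1, x.2, x.2+1} : Finset (Fin (6*w+1+2))),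
          (6*w+1+2) * (trip t (a.val/3) (b.val%3) - 1) = (6*w+1+2)*(9*t+3) := by
      intro a _
      exact sum3gen (fun r => (6*w+1+2) * (trip t (a.val/3) r - 1)) ((6*w+1+2)*(9*t+3)) x.2
        (fun r => by
          rw [← Nat.mul_add, ← Nat.mul_add, tripP3 t (a.val/3) r (by have := a.isLt; omega)])
    rw [Finset.sum_congr rfl h1]
    exact sum3gen (fun _ => (6*w+1+2)*(9*t+3)) _ x.1 (fun r => by ring)
  have hB : ∑ b ∈ ({x.2-1, x.2, x.2+1} : Finset (Fin (6*w+1+2))),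
      ∑ a ∈ ({x.1-1, x.1, x.1+1} : Finset (Fin (6*t+1+2))),
        trip w (b.val/3) (a.val%3) = 3*(9*w+6) := by
    have h1 : ∀ b ∈ ({x.2-1, x.2, x.2+1} : Finset (Fin (6*w+1+2))),
        ∑ a ∈ ({x.1-1, x.1, x.1+1} : Finset (Fin (6*t+1+2))),
          trip w (b.val/3) (a.val%3) = 9*w+6 := by
      intro b _
      exact sum3gen (fun r => trip w (b.val/3) r) (9*w+6) x.1
        (fun r => tripQ3 w (b.val/3) r (by have := b.isLt; omega))
    rw [Finset.sum_congr rfl h1]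
    exact sum3gen (fun _ => 9*w+6) _ x.2 (fun r => by ring)
  rw [hA, hB]
end

section
/- Let G = Ci(n, {c, 2c, ..., kc}) with k ≥ 1. If G admits a closed distance magic labeling, then n = 2kc or n = (2k+1)c. -/
open Finset SimpleGraph

/-- The jump set `{c, 2c, …, kc}` of the circulant graph `Ci(n, {c, 2c, …, kc})`,
viewed inside `ZMod n`. -/
def circJumps (n c k : ℕ) : Set (ZMod n) :=
  ↑((Finset.Icc 1 k).image (fun i => ((i * c : ℕ) : ZMod n)))

instance (n c k : ℕ) : DecidablePred (· ∈ circJumps n c k) := fun z => by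
  unfold circJumps; infer_instance

theorem stmt_14 (n c k : ℕ) [NeZero n] (hk : 1 ≤ k) (hc : 1 ≤ c)
    (hS : 2 * k * c ≤ n)
    (hmagic : IsClosedDistanceMagic (circulantGraph (circJumps n c k))) :
    n = 2 * k * c ∨ n = (2 * k + 1) * c := by
  by_contra hcon
  push_neg at hcon
  obtain ⟨h1, h2⟩ := hcon
  have hlt : 2 * k * c < n := lt_of_le_of_ne hS (fun h => h1 h.symm)
  -- n does not divide (2k+1)c
  have hnd : ¬ ((n : ℤ) ∣ ((2 * k + 1) * c : ℤ)) := by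
    intro hdvd
    have hdvd' : n ∣ (2 * k + 1) * c := by exact_mod_cast hdvd
    obtain ⟨m, hm⟩ := hdvd'
    rcases Nat.lt_or_ge m 2 with hm2 | hm2
    · interval_cases m
      · simp at hm; nlinarith
      · exact h2 (by omega)
    · nlinarith
  obtain ⟨κ, hκpos, ℓ, hℓ⟩ := hmagic
  set G := circulantGraph (circJumps n c k) with hG
  -- casting helper
  have h0 : ∀ j : ℤ, -(2 * k : ℤ) ≤ j → j ≤ 2 * k → ((j * c : ℤ) : ZMod n) = 0 → j = 0 := by
    intro j hj1 hj2 hcast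
    have hdvd : (n : ℤ) ∣ j * c := (ZMod.intCast_zmod_eq_zero_iff_dvd _ _).mp hcast
    by_contra hj
    have hcne : (c : ℤ) ≠ 0 := by exact_mod_cast (by omega : c ≠ 0)
    have hne : j * c ≠ 0 := mul_ne_zero hj hcne
    have hle : (n : ℤ) ≤ |j * c| := Int.le_of_dvd (abs_pos.mpr hne) ((dvd_abs _ _).mpr hdvd)
    have habs : |j * c| ≤ 2 * k * c := by
      rw [abs_mul, abs_of_nonneg (by positivity : (0:ℤ) ≤ (c:ℤ))]
      have : |j| ≤ (2 * k : ℤ) := abs_le.mpr ⟨hj1, hj2⟩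
      calc |j| * (c:ℤ) ≤ (2 * k : ℤ) * c := by
            exact mul_le_mul_of_nonneg_right this (by positivity)
        _ = ((2 * k * c : ℕ) : ℤ) := by push_cast; ring
    have : ((2 * k * c : ℕ) : ℤ) < (n : ℤ) := by exact_mod_cast hlt
    linarith
  -- injectivity of j ↦ x + j*c on Icc (-k) k
  have hinj : ∀ x : ZMod n, ∀ j1 ∈ Finset.Icc (-(k:ℤ)) (k:ℤ), ∀ j2 ∈ Finset.Icc (-(k:ℤ)) (k:ℤ),
      x + ((j1 * c : ℤ) : ZMod n) = x + ((j2 * c : ℤ) : ZMod n) → j1 = j2 := by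
    intro x j1 hj1 j2 hj2 heq
    simp only [Finset.mem_Icc] at hj1 hj2
    have : (((j1 - j2) * c : ℤ) : ZMod n) = 0 := by
      push_cast
      rw [sub_mul]
      have : ((j1 * c : ℤ) : ZMod n) = ((j2 * c : ℤ) : ZMod n) := by
        have := add_left_cancel heq
        push_cast at this ⊢
        exact this
      push_cast at this
      rw [this]; ring
    have := h0 (j1 - j2) (by omega) (by omega) this
    omega
  -- closed neighborhood as an image
  have hnb : ∀ x : ZMod n, insert x (G.neighborFinset x)
      = (Finset.Icc (-(k:ℤ)) (k:ℤ)).image (fun j => x + ((j * c : ℤ) : ZMod n)) := by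
    intro x
    ext y
    simp only [Finset.mem_insert, SimpleGraph.mem_neighborFinset, Finset.mem_image,
      Finset.mem_Icc, hG, circulantGraph, fromRel_adj]
    constructor
    · rintro (rfl | ⟨hne, hmem | hmem⟩)
      · exact ⟨0, ⟨by omega, by omega⟩, by push_cast; ring⟩
      · -- x - y ∈ circJumps
        simp only [circJumps, Finset.coe_image, Set.mem_image, Finset.mem_coe,
          Finset.mem_Icc] at hmem
        obtain ⟨i, hi, hiv⟩ := hmem
        refine ⟨-(i:ℤ), ⟨by omega, by omega⟩, ?_⟩
        have : ((i * c : ℕ) : ZMod n) = x - y := hiv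
        push_cast at this ⊢
        linear_combination -this
      · simp only [circJumps, Finset.coe_image, Set.mem_image, Finset.mem_coe,
          Finset.mem_Icc] at hmem
        obtain ⟨i, hi, hiv⟩ := hmem
        refine ⟨(i:ℤ), ⟨by omega, by omega⟩, ?_⟩
        have : ((i * c : ℕ) : ZMod n) = y - x := hiv
        push_cast at this ⊢
        linear_combination this
    · rintro ⟨j, ⟨hj1, hj2⟩, rfl⟩
      rcases eq_or_ne j 0 with rfl | hj0
      · left; push_cast; ring
      · right
        have hjc : ((j * c : ℤ) : ZMod n) ≠ 0 := fun h => hj0 (h0 j (by omega) (by omega) h)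
        refine ⟨fun h => hjc (by linear_combination -h), ?_⟩
        rcases lt_or_gt_of_ne hj0 with hneg | hpos
        · left
          simp only [circJumps, Finset.coe_image, Set.mem_image, Finset.mem_coe, Finset.mem_Icc]
          refine ⟨(-j).toNat, ⟨by omega, by omega⟩, ?_⟩
          have hco : ((((-j).toNat : ℤ)) : ZMod n) = ((-j : ℤ) : ZMod n) := by
            rw [Int.toNat_of_nonneg (by omega)]
          push_cast at hco ⊢
          rw [hco]
          ring
        · right
          simp only [circJumps, Finset.coe_image, Set.mem_image, Finset.mem_coe, Finset.mem_Icc]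
          refine ⟨j.toNat, ⟨by omega, by omega⟩, ?_⟩
          have hco : (((j.toNat : ℤ)) : ZMod n) = ((j : ℤ) : ZMod n) := by
            rw [Int.toNat_of_nonneg (by omega)]
          push_cast at hco ⊢
          rw [hco]
          ring
  -- the magic sums as indexed sums
  set L : ZMod n → ℕ := fun y => (ℓ y : ℕ) + 1 with hL
  have hsum : ∀ x : ZMod n, ∑ j ∈ Finset.Icc (-(k:ℤ)) (k:ℤ),
      L (x + ((j * c : ℤ) : ZMod n)) = κ := by
    intro x
    rw [← hℓ x, hnb x, Finset.sum_image (hinj x)]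
  -- shift relation
  have key : ∀ x : ZMod n, L (x + ((-(k:ℤ) * c : ℤ) : ZMod n))
      = L (x + ((((k:ℤ) + 1) * c : ℤ) : ZMod n)) := by
    intro x
    have hA := hsum x
    have hB := hsum (x + ((1 * c : ℤ) : ZMod n))
    have hB' : ∑ j ∈ Finset.Icc (-(k:ℤ) + 1) ((k:ℤ) + 1),
        L (x + ((j * c : ℤ) : ZMod n)) = κ := by
      rw [← Finset.map_add_right_Icc (-(k:ℤ)) (k:ℤ) 1, Finset.sum_map, ← hB]
      apply Finset.sum_congr rfl
      intro j _
      congr 1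
      simp only [addRightEmbedding_apply]
      push_cast
      ring
    have e1 : Finset.Icc (-(k:ℤ)) (k:ℤ)
        = insert (-(k:ℤ)) (Finset.Icc (-(k:ℤ) + 1) (k:ℤ)) := by
      ext j; simp only [Finset.mem_Icc, Finset.mem_insert]; omega
    have e2 : Finset.Icc (-(k:ℤ) + 1) ((k:ℤ) + 1)
        = insert ((k:ℤ) + 1) (Finset.Icc (-(k:ℤ) + 1) (k:ℤ)) := by
      ext j; simp only [Finset.mem_Icc, Finset.mem_insert]; omega
    rw [e1, Finset.sum_insert (by simp only [Finset.mem_Icc]; omega)] at hA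
    rw [e2, Finset.sum_insert (by simp only [Finset.mem_Icc]; omega)] at hB'
    omega
  -- instantiate at x = k*c
  have hx := key (((k : ℤ) * c : ℤ) : ZMod n)
  have hz : (((k:ℤ) * c : ℤ) : ZMod n) + ((-(k:ℤ) * c : ℤ) : ZMod n) = 0 := by
    push_cast; ring
  have hd : (((k:ℤ) * c : ℤ) : ZMod n) + ((((k:ℤ) + 1) * c : ℤ) : ZMod n)
      = (((2 * k + 1) * c : ℤ) : ZMod n) := by
    push_cast; ring
  rw [hz, hd] at hx
  have hℓeq : ℓ 0 = ℓ (((2 * k + 1) * c : ℤ) : ZMod n) := by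
    have : (ℓ (0 : ZMod n) : ℕ) = (ℓ ((((2 * k + 1) * c : ℤ)) : ZMod n) : ℕ) := by
      simp only [hL] at hx; omega
    exact Fin.ext this
  have : (0 : ZMod n) = (((2 * k + 1) * c : ℤ) : ZMod n) := ℓ.injective hℓeq
  exact hnd ((ZMod.intCast_zmod_eq_zero_iff_dvd _ _).mp this.symm)
end

section
/- The circulant graph Ci(2kc, {c, 2c, ..., kc}) admits a closed distance magic labeling; explicitly, ℓ(v_i) = i+1 and ℓ(v_{ck+i}) = n−i for i ∈ {0,...,ck−1} gives all weights equal to k(n+1), where n = 2kc. -/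
open Finset SimpleGraph

lemma cast_add_self (n a : ℕ) : ((a + n : ℕ) : ZMod n) = (a : ZMod n) := by
  rw [Nat.cast_add, ZMod.natCast_self, add_zero]

def gmagic (n m v : ℕ) : ℕ := if v < m then v else n - 1 - (v - m)

lemma gmagic_lt {n m : ℕ} (hm : 1 ≤ m) (hn2 : n = 2 * m) {v : ℕ} (hv : v < n) :
    gmagic n m v < n := by unfold gmagic; split_ifs <;> omega

lemma gmagic_invol {n m : ℕ} (hm : 1 ≤ m) (hn2 : n = 2 * m) {v : ℕ} (hv : v < n) :
    gmagic n m (gmagic n m v) = v := by unfold gmagic; split_ifs <;> omega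

def magicEquiv (n m : ℕ) [NeZero n] (hm : 1 ≤ m) (hn2 : n = 2 * m) : ZMod n ≃ Fin n where
  toFun z := ⟨gmagic n m z.val, gmagic_lt hm hn2 z.val_lt⟩
  invFun i := ((gmagic n m i.val : ℕ) : ZMod n)
  left_inv z := by
    simp only [gmagic_invol hm hn2 z.val_lt]
    exact ZMod.natCast_rightInverse z
  right_inv i := by
    ext
    simp only
    rw [ZMod.val_cast_of_lt (gmagic_lt hm hn2 i.isLt)]
    exact gmagic_invol hm hn2 i.isLt

lemma jump_mem_or (n c k : ℕ) [NeZero n] (hn : n = 2 * k * c)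
    {d : ℕ} (hd1 : 1 ≤ d) (hd2 : d < 2 * k) :
    ((d * c : ℕ) : ZMod n) ∈ circJumps n c k ∨
      (-((d * c : ℕ) : ZMod n) : ZMod n) ∈ circJumps n c k := by
  by_cases h : d ≤ k
  · left
    simp only [circJumps, Finset.coe_image, Set.mem_image, Finset.mem_coe, Finset.mem_Icc]
    exact ⟨d, ⟨hd1, h⟩, rfl⟩
  · right
    have h2 : ((2 * k - d) * c + d * c : ℕ) = n := by
      rw [hn, ← add_mul]
      congr 1
      omega
    have hz : (((2 * k - d) * c : ℕ) : ZMod n) + ((d * c : ℕ) : ZMod n) = 0 := by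
      rw [← Nat.cast_add, h2, ZMod.natCast_self]
    have hneg : (((2 * k - d) * c : ℕ) : ZMod n) = -((d * c : ℕ) : ZMod n) :=
      eq_neg_of_add_eq_zero_left hz
    rw [← hneg]
    simp only [circJumps, Finset.coe_image, Set.mem_image, Finset.mem_coe, Finset.mem_Icc]
    exact ⟨2 * k - d, ⟨by omega, by omega⟩, rfl⟩

lemma closed_nbhd_eq (n c k : ℕ) [NeZero n] (hk : 1 ≤ k) (hc : 1 ≤ c) (hn : n = 2 * k * c)
    (x : ZMod n) :
    insert x ((circulantGraph (circJumps n c k)).neighborFinset x) =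
      (Finset.range (2 * k)).image (fun j => ((j * c + x.val % c : ℕ) : ZMod n)) := by
  have hc0 : 0 < c := hc
  obtain ⟨q, r, hr, hx⟩ : ∃ q r, r < c ∧ x.val = q * c + r :=
    ⟨x.val / c, x.val % c, Nat.mod_lt _ hc0, by rw [mul_comm]; exact (Nat.div_add_mod _ _).symm⟩
  have hrm : x.val % c = r := by rw [hx, add_comm, Nat.add_mul_mod_self_right, Nat.mod_eq_of_lt hr]
  rw [hrm]
  have hq : q < 2 * k := by
    by_contra hq
    have h1 : 2 * k * c ≤ q * c := Nat.mul_le_mul_right c (by omega)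
    have h2 := x.val_lt
    omega
  have hlt : ∀ j, j < 2 * k → j * c + r < n := by
    intro j hj
    have h1 : j * c + c ≤ 2 * k * c := by
      have := Nat.mul_le_mul_right c (show j + 1 ≤ 2 * k by omega)
      rwa [add_mul, one_mul] at this
    omega
  have hval : ∀ j, j < 2 * k → ((j * c + r : ℕ) : ZMod n).val = j * c + r :=
    fun j hj => ZMod.val_cast_of_lt (hlt j hj)
  have hxc : x = ((q * c + r : ℕ) : ZMod n) := by
    rw [← hx]; exact (ZMod.natCast_rightInverse x).symm
  ext z
  simp only [Finset.mem_insert, SimpleGraph.mem_neighborFinset, circulantGraph_adj,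
    Finset.mem_image, Finset.mem_range]
  constructor
  · rintro (rfl | ⟨hne, hS⟩)
    · exact ⟨q, hq, hxc.symm⟩
    · rcases hS with hS | hS
      · -- x - z ∈ circJumps
        simp only [circJumps, Finset.coe_image, Set.mem_image, Finset.mem_coe,
          Finset.mem_Icc] at hS
        obtain ⟨i, ⟨hi1, hik⟩, hic⟩ := hS
        have hzx : z = x - ((i * c : ℕ) : ZMod n) := by rw [hic, sub_sub_cancel]
        by_cases hiq : i ≤ q
        · refine ⟨q - i, by omega, ?_⟩
          rw [hzx]
          refine eq_sub_of_add_eq ?_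
          have h1 : (q - i) * c + i * c = q * c := by rw [← add_mul, Nat.sub_add_cancel hiq]
          rw [← Nat.cast_add, show (q - i) * c + r + i * c = q * c + r by omega, ← hxc]
        · refine ⟨q + 2 * k - i, by omega, ?_⟩
          rw [hzx]
          refine eq_sub_of_add_eq ?_
          have h1 : (q + 2 * k - i) * c + i * c = (q + 2 * k) * c := by
            rw [← add_mul]; congr 1; omega
          have h2 : (q + 2 * k) * c = q * c + 2 * k * c := add_mul q (2 * k) c
          have h3 : (q + 2 * k - i) * c + r + i * c = (q * c + r) + n := by rw [hn]; omega
          rw [← Nat.cast_add, h3, cast_add_self, ← hxc]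
      · -- z - x ∈ circJumps
        simp only [circJumps, Finset.coe_image, Set.mem_image, Finset.mem_coe,
          Finset.mem_Icc] at hS
        obtain ⟨i, ⟨hi1, hik⟩, hic⟩ := hS
        have hzx : z = x + ((i * c : ℕ) : ZMod n) := by
          rw [hic, add_comm, sub_add_cancel]
        by_cases hiq : q + i < 2 * k
        · refine ⟨q + i, hiq, ?_⟩
          rw [hzx, hxc, ← Nat.cast_add]
          congr 1
          rw [add_mul]
          omega
        · refine ⟨q + i - 2 * k, by omega, ?_⟩
          rw [hzx, hxc, ← Nat.cast_add]
          have h1 : (q + i - 2 * k) * c + 2 * k * c = (q + i) * c := by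
            rw [← add_mul]; congr 1; omega
          have h2 : (q + i) * c = q * c + i * c := add_mul q i c
          have h3 : q * c + r + i * c = ((q + i - 2 * k) * c + r) + n := by rw [hn]; omega
          rw [h3, cast_add_self]
  · rintro ⟨j, hj, rfl⟩
    by_cases hjq : j = q
    · left; rw [hjq]; exact hxc.symm
    · right
      have hne : x ≠ ((j * c + r : ℕ) : ZMod n) := by
        intro heq
        have hv : x.val = j * c + r := by rw [heq, hval j hj]
        have h1 : q * c = j * c := by omega
        exact hjq (Nat.eq_of_mul_eq_mul_right hc0 h1).symm
      refine ⟨hne, ?_⟩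
      rcases Nat.lt_or_ge q j with hlt' | hge'
      · have hdz : ((j * c + r : ℕ) : ZMod n) - x = (((j - q) * c : ℕ) : ZMod n) := by
          rw [hxc, sub_eq_iff_eq_add, ← Nat.cast_add]
          congr 1
          have h1 : (j - q) * c + q * c = j * c := by rw [← add_mul]; congr 1; omega
          omega
        rcases jump_mem_or n c k hn (d := j - q) (by omega) (by omega) with hmem | hmem
        · right; rw [hdz]; exact hmem
        · left
          have h2 : x - ((j * c + r : ℕ) : ZMod n) = -(((j - q) * c : ℕ) : ZMod n) := by
            rw [← hdz, neg_sub]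
          rw [h2]; exact hmem
      · have hq_gt : j < q := by omega
        have hdz : x - ((j * c + r : ℕ) : ZMod n) = (((q - j) * c : ℕ) : ZMod n) := by
          rw [hxc, sub_eq_iff_eq_add, ← Nat.cast_add]
          congr 1
          have h1 : (q - j) * c + j * c = q * c := by rw [← add_mul]; congr 1; omega
          omega
        rcases jump_mem_or n c k hn (d := q - j) (by omega) (by omega) with hmem | hmem
        · left; rw [hdz]; exact hmem
        · right
          have h2 : ((j * c + r : ℕ) : ZMod n) - x = -(((q - j) * c : ℕ) : ZMod n) := by
            rw [← hdz, neg_sub]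
          rw [h2]; exact hmem

lemma magic_sum (n c k : ℕ) [NeZero n] (hk : 1 ≤ k) (hc : 1 ≤ c) (hn : n = 2 * k * c)
    (x : ZMod n) :
    ∑ y ∈ insert x ((circulantGraph (circJumps n c k)).neighborFinset x),
      (if (y.val : ℕ) < c * k then y.val + 1 else n - (y.val - c * k)) = k * (n + 1) := by
  have hc0 : 0 < c := hc
  rw [closed_nbhd_eq n c k hk hc hn x]
  obtain ⟨r, hr, hrm⟩ : ∃ r, r < c ∧ x.val % c = r := ⟨_, Nat.mod_lt _ hc0, rfl⟩
  rw [hrm]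
  have hlt : ∀ j, j < 2 * k → j * c + r < n := by
    intro j hj
    have h1 : j * c + c ≤ 2 * k * c := by
      have := Nat.mul_le_mul_right c (show j + 1 ≤ 2 * k by omega)
      rwa [add_mul, one_mul] at this
    omega
  have hval : ∀ j, j < 2 * k → ((j * c + r : ℕ) : ZMod n).val = j * c + r :=
    fun j hj => ZMod.val_cast_of_lt (hlt j hj)
  rw [Finset.sum_image (by
    intro a ha b hb hab
    rw [Finset.mem_coe, Finset.mem_range] at ha hb
    beta_reduce at hab
    have h0 := congrArg ZMod.val hab
    rw [hval a ha, hval b hb] at h0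
    have h1 : a * c = b * c := by omega
    exact Nat.eq_of_mul_eq_mul_right hc0 h1)]
  have hterm : ∀ j ∈ Finset.range (2 * k),
      (if (((j * c + r : ℕ) : ZMod n)).val < c * k
        then (((j * c + r : ℕ) : ZMod n)).val + 1
        else n - ((((j * c + r : ℕ) : ZMod n)).val - c * k)) =
      (if j * c + r < c * k then j * c + r + 1 else n - (j * c + r - c * k)) := by
    intro j hj
    rw [Finset.mem_range] at hj
    rw [hval j hj]
  rw [Finset.sum_congr rfl hterm]
  rw [two_mul, Finset.sum_range_add]
  have hfirst : ∀ j ∈ Finset.range k,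
      (if j * c + r < c * k then j * c + r + 1 else n - (j * c + r - c * k)) = j * c + r + 1 := by
    intro j hj
    rw [Finset.mem_range] at hj
    have h1 : j * c + c ≤ k * c := by
      have := Nat.mul_le_mul_right c (show j + 1 ≤ k by omega)
      rwa [add_mul, one_mul] at this
    rw [if_pos (by rw [mul_comm c k]; omega)]
  have hsecond : ∀ j ∈ Finset.range k,
      (if (k + j) * c + r < c * k then (k + j) * c + r + 1 else n - ((k + j) * c + r - c * k)) =
        n - (j * c + r) := by
    intro j hj
    have hkc : (k + j) * c = k * c + j * c := add_mul k j c
    rw [if_neg (by rw [mul_comm c k]; omega)]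
    congr 1
    rw [mul_comm c k]
    omega
  rw [Finset.sum_congr rfl hfirst, Finset.sum_congr rfl hsecond, ← Finset.sum_add_distrib]
  have hpair : ∀ j ∈ Finset.range k, (j * c + r + 1) + (n - (j * c + r)) = n + 1 := by
    intro j hj
    rw [Finset.mem_range] at hj
    have := hlt j (by omega)
    omega
  rw [Finset.sum_congr rfl hpair, Finset.sum_const, Finset.card_range, smul_eq_mul]

theorem stmt_15 (n c k : ℕ) [NeZero n] (hk : 1 ≤ k) (hc : 1 ≤ c)
    (hn : n = 2 * k * c) :
    IsClosedDistanceMagic (circulantGraph (circJumps n c k)) ∧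
      (∀ x : ZMod n,
        ∑ y ∈ insert x ((circulantGraph (circJumps n c k)).neighborFinset x),
          (if (y.val : ℕ) < c * k then y.val + 1 else n - (y.val - c * k)) =
            k * (n + 1)) := by
  have hm : 1 ≤ c * k := Nat.one_le_iff_ne_zero.mpr (by positivity)
  have hn2 : n = 2 * (c * k) := by rw [hn]; ring
  constructor
  · refine ⟨k * (n + 1), Nat.mul_pos hk (Nat.succ_pos n), ?_⟩
    refine ⟨(magicEquiv n (c * k) hm hn2).trans (finCongr (ZMod.card n).symm), ?_⟩
    intro x
    rw [← magic_sum n c k hk hc hn x]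
    apply Finset.sum_congr rfl
    intro y hy
    simp only [Equiv.trans_apply, finCongr_apply, Fin.coe_cast]
    show gmagic n (c * k) y.val + 1 = _
    have hv := y.val_lt
    unfold gmagic
    split_ifs with h
    · rfl
    · omega
  · exact magic_sum n c k hk hc hn
end

section
/- Let G = Ci((2k+1)c, {c, 2c, ..., kc}) with c ≥ 1. Then G admits a closed distance magic labeling if and only if c is odd. -/
open Finset SimpleGraph

/-- Row permutations used to build the magic labeling. -/
def piRow (t : ℕ) (q r : ℕ) : ℕ :=
  if q = 0 then r
  else if q = 1 then (if r ≤ t then r + t else r - (t + 1))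
  else if q = 2 then (if r ≤ t then 2 * (t - r) else 4 * t + 1 - 2 * r)
  else if q % 2 = 1 then r else 2 * t - r

lemma piRow_le (t q r : ℕ) (hr : r ≤ 2 * t) : piRow t q r ≤ 2 * t := by
  unfold piRow; split_ifs <;> omega

lemma piRow_inj (t q : ℕ) {r r' : ℕ} (hr : r ≤ 2 * t) (hr' : r' ≤ 2 * t)
    (h : piRow t q r = piRow t q r') : r = r' := by
  unfold piRow at h; split_ifs at h <;> omega

lemma piRow_big_odd (t q r : ℕ) (h3 : 3 ≤ q) (hq : q % 2 = 1) : piRow t q r = r := by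
  unfold piRow; split_ifs <;> omega

lemma piRow_big_even (t q r : ℕ) (h3 : 3 ≤ q) (hq : q % 2 = 0) :
    piRow t q r = 2 * t - r := by
  unfold piRow; split_ifs <;> omega

lemma piRow_sum (t k r : ℕ) (hk : 1 ≤ k) (hr : r ≤ 2 * t) :
    ∑ q ∈ Finset.range (2 * k + 1), piRow t q r = (2 * k + 1) * t := by
  induction k with
  | zero => omega
  | succ k ih =>
    rcases Nat.eq_zero_or_pos k with h0 | h1
    · subst h0
      rw [show 2 * (0 + 1) + 1 = 3 from rfl]
      rw [Finset.sum_range_succ, Finset.sum_range_succ, Finset.sum_range_succ,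
        Finset.sum_range_zero]
      unfold piRow
      norm_num
      split_ifs <;> omega
    · have h1' : piRow t (2 * k + 1) r = r := piRow_big_odd t _ r (by omega) (by omega)
      have h2' : piRow t (2 * k + 2) r = 2 * t - r :=
        piRow_big_even t _ r (by omega) (by omega)
      calc ∑ q ∈ Finset.range (2 * (k + 1) + 1), piRow t q r
          = ∑ q ∈ Finset.range (2 * k + 1), piRow t q r
            + piRow t (2 * k + 1) r + piRow t (2 * k + 2) r := by
            rw [show 2 * (k + 1) + 1 = (2 * k + 1) + 1 + 1 by ring,
              Finset.sum_range_succ, Finset.sum_range_succ]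
        _ = (2 * k + 1) * t + (r + (2 * t - r)) := by rw [ih h1, h1', h2']; ring
        _ = (2 * k + 1) * t + 2 * t := by rw [Nat.add_sub_cancel' hr]
        _ = (2 * (k + 1) + 1) * t := by ring

lemma natCast_val_self {n : ℕ} [NeZero n] (a : ZMod n) : ((a.val : ℕ) : ZMod n) = a := by
  rw [ZMod.natCast_val, ZMod.cast_id]

lemma mem_closed_nbhd {n c k : ℕ} [NeZero n] (hk : 1 ≤ k) (hc : 1 ≤ c)
    (hn : n = (2 * k + 1) * c) (x y : ZMod n) :
    y ∈ insert x ((circulantGraph (circJumps n c k)).neighborFinset x) ↔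
      y.val % c = x.val % c := by
  have hcn : c ∣ n := hn ▸ dvd_mul_left c (2 * k + 1)
  have hn0 : 0 < n := Nat.pos_of_ne_zero (NeZero.ne n)
  have hkc : k * c < n := by
    rw [hn]
    calc k * c < k * c + c := by omega
      _ ≤ 2 * (k * c) + c := by omega
      _ = (2 * k + 1) * c := by ring
  rw [Finset.mem_insert, SimpleGraph.mem_neighborFinset, SimpleGraph.circulantGraph_adj]
  constructor
  · rintro (rfl | ⟨hne, hS⟩); · rfl
    have key : ∀ a b : ZMod n, a - b ∈ circJumps n c k → a.val % c = b.val % c := by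
      intro a b hab
      rw [circJumps, Finset.mem_coe, Finset.mem_image] at hab
      obtain ⟨i, hi, hie⟩ := hab
      rw [Finset.mem_Icc] at hi
      have hlt : i * c < n :=
        lt_of_le_of_lt (Nat.mul_le_mul_right c hi.2) hkc
      have hval : (a - b).val = i * c := by rw [← hie, ZMod.val_cast_of_lt hlt]
      have hab' : a = b + (a - b) := by ring
      rw [hab', ZMod.val_add, Nat.mod_mod_of_dvd _ hcn, hval,
        Nat.add_mul_mod_self_right]
    rcases hS with h | h
    · exact (key x y h).symm
    · exact key y x h
  · intro h
    by_cases hxy : y = x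
    · exact Or.inl hxy
    right
    have hne' : y.val ≠ x.val := fun hv => hxy (ZMod.val_injective n hv)
    refine ⟨fun hh => hxy hh.symm, ?_⟩
    have key2 : ∀ a b : ZMod n, a.val % c = b.val % c → b.val < a.val →
        a - b ∈ circJumps n c k ∨ b - a ∈ circJumps n c k := by
      intro a b hmod hlt
      have hdvd : c ∣ a.val - b.val :=
        (Nat.modEq_iff_dvd' hlt.le).mp (hmod.symm : b.val ≡ a.val [MOD c])
      obtain ⟨j, hjd⟩ := hdvd
      have hav : a.val < n := ZMod.val_lt a
      have hj1 : 1 ≤ j := by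
        rcases Nat.eq_zero_or_pos j with h0 | h1
        · subst h0; omega
        · exact h1
      have hjc : c * j ≤ a.val := by omega
      have hj2k : j ≤ 2 * k := by
        have hcj : c * j < c * (2 * k + 1) := by
          calc c * j ≤ a.val := hjc
            _ < n := hav
            _ = c * (2 * k + 1) := by rw [hn]; ring
        have := Nat.lt_of_mul_lt_mul_left hcj
        omega
      have hab : a - b = ((j * c : ℕ) : ZMod n) := by
        have h1 : ((a.val - b.val : ℕ) : ZMod n) = a - b := by
          rw [Nat.cast_sub hlt.le]
          simp only [ZMod.natCast_val, ZMod.cast_id]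
        rw [← h1, hjd, mul_comm]
      by_cases hjk : j ≤ k
      · left
        rw [circJumps, Finset.mem_coe, Finset.mem_image]
        exact ⟨j, Finset.mem_Icc.mpr ⟨hj1, hjk⟩, hab.symm⟩
      · right
        rw [circJumps, Finset.mem_coe, Finset.mem_image]
        refine ⟨2 * k + 1 - j, Finset.mem_Icc.mpr ⟨by omega, by omega⟩, ?_⟩
        have hjcn : j * c ≤ n := by
          rw [hn]; exact Nat.mul_le_mul_right c (by omega)
        have hsub : (2 * k + 1 - j) * c = n - j * c := by
          rw [hn, Nat.sub_mul]
        rw [hsub, Nat.cast_sub hjcn, ← hab, ZMod.natCast_self]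
        ring
    rcases Nat.lt_or_ge y.val x.val with hlt | hge
    · exact key2 x y h.symm hlt
    · have hlt : x.val < y.val := by omega
      exact Or.symm (key2 y x h hlt)

theorem stmt_16 (n c k : ℕ) [NeZero n] (hk : 1 ≤ k) (hc : 1 ≤ c)
    (hn : n = (2 * k + 1) * c) :
    IsClosedDistanceMagic (circulantGraph (circJumps n c k)) ↔ Odd c := by
  have hn0 : 0 < n := Nat.pos_of_ne_zero (NeZero.ne n)
  have hcn : c ∣ n := hn ▸ dvd_mul_left c (2 * k + 1)
  have hcard : Fintype.card (ZMod n) = n := ZMod.card n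
  have hsum_range : (∑ q ∈ Finset.range (2 * k + 1), q) = k * (2 * k + 1) := by
    apply Nat.eq_of_mul_eq_mul_right (show 0 < 2 by norm_num)
    rw [Finset.sum_range_id_mul_two (2 * k + 1), Nat.add_sub_cancel]
    ring
  constructor
  · rintro ⟨k₀, hk₀pos, ℓ, hℓ⟩
    have htot : (∑ y : ZMod n, ((ℓ y : ℕ) + 1)) * 2 = n * (n + 1) := by
      have h1 : ∑ y : ZMod n, ((ℓ y : ℕ) + 1)
          = ∑ i : Fin (Fintype.card (ZMod n)), ((i : ℕ) + 1) :=
        Equiv.sum_comp ℓ (fun i => ((i : ℕ) + 1))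
      rw [h1, Fin.sum_univ_eq_sum_range (fun j => j + 1) (Fintype.card (ZMod n)), hcard]
      have h2 : ∑ i ∈ Finset.range (n + 1), i
          = ∑ i ∈ Finset.range n, (i + 1) := by
        rw [Finset.sum_range_succ' (fun i => i) n]; simp
      have h3 := Finset.sum_range_id_mul_two (n + 1)
      rw [h2] at h3
      simpa [Nat.mul_comm] using h3
    have hfib : ∑ r ∈ Finset.range c,
        ∑ y ∈ Finset.univ.filter (fun y : ZMod n => y.val % c = r), ((ℓ y : ℕ) + 1)
        = ∑ y : ZMod n, ((ℓ y : ℕ) + 1) :=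
      Finset.sum_fiberwise_of_maps_to
        (fun y _ => Finset.mem_range.mpr (Nat.mod_lt _ hc)) _
    have hfiber : ∀ r ∈ Finset.range c,
        ∑ y ∈ Finset.univ.filter (fun y : ZMod n => y.val % c = r), ((ℓ y : ℕ) + 1)
        = k₀ := by
      intro r hr
      rw [Finset.mem_range] at hr
      have hrn : r < n := lt_of_lt_of_le hr (Nat.le_of_dvd hn0 hcn)
      have hxval : ((r : ZMod n)).val = r := ZMod.val_cast_of_lt hrn
      have hset : Finset.univ.filter (fun y : ZMod n => y.val % c = r)
          = insert ((r : ZMod n))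
            ((circulantGraph (circJumps n c k)).neighborFinset ((r : ZMod n))) := by
        ext y
        rw [mem_closed_nbhd hk hc hn, Finset.mem_filter, hxval, Nat.mod_eq_of_lt hr]
        simp
      rw [hset]
      exact hℓ _
    rw [Finset.sum_congr rfl hfiber] at hfib
    simp only [Finset.sum_const, Finset.card_range, smul_eq_mul] at hfib
    have hE : c * (k₀ * 2) = c * ((2 * k + 1) * (n + 1)) := by
      calc c * (k₀ * 2) = (c * k₀) * 2 := by ring
        _ = n * (n + 1) := by rw [hfib, htot]
        _ = (2 * k + 1) * c * (n + 1) := by rw [hn]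
        _ = c * ((2 * k + 1) * (n + 1)) := by ring
    have hE' : k₀ * 2 = (2 * k + 1) * (n + 1) :=
      Nat.eq_of_mul_eq_mul_left hc hE
    rcases Nat.even_or_odd c with he | ho
    · exfalso
      have hne : Even n := by rw [hn]; exact he.mul_left _
      have ho1 : Odd ((2 * k + 1) * (n + 1)) :=
        Odd.mul ⟨k, by ring⟩ (Even.add_one hne)
      rw [← hE'] at ho1
      exact (Nat.not_odd_iff_even.mpr ⟨k₀, by ring⟩) ho1
    · exact ho
  · intro hodd
    obtain ⟨t, hct⟩ := hodd
    have hmodle : ∀ z : ZMod n, z.val % c ≤ 2 * t := by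
      intro z; have := Nat.mod_lt z.val hc; omega
    have hboundf : ∀ z : ZMod n,
        piRow t (z.val / c) (z.val % c) + (z.val / c) * c < n := by
      intro z
      have hzv : z.val < n := ZMod.val_lt z
      have hq : z.val / c ≤ 2 * k := by
        have h1 : z.val / c < 2 * k + 1 := by
          rw [Nat.div_lt_iff_lt_mul hc, ← hn]; exact hzv
        omega
      have hp : piRow t (z.val / c) (z.val % c) ≤ 2 * t :=
        piRow_le t _ _ (hmodle z)
      have h2 : (z.val / c) * c ≤ 2 * k * c := Nat.mul_le_mul_right c hq
      have h3 : 2 * k * c + c = (2 * k + 1) * c := by ring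
      omega
    set f : ZMod n → Fin (Fintype.card (ZMod n)) :=
      fun z => ⟨piRow t (z.val / c) (z.val % c) + (z.val / c) * c,
        by rw [hcard]; exact hboundf z⟩ with hf
    have hfval : ∀ z : ZMod n,
        (f z : ℕ) = piRow t (z.val / c) (z.val % c) + (z.val / c) * c := fun z => rfl
    have hpilt : ∀ z : ZMod n, piRow t (z.val / c) (z.val % c) < c := by
      intro z
      have := piRow_le t (z.val / c) (z.val % c) (hmodle z)
      omega
    have hinj : Function.Injective f := by
      intro z w hzw
      have h1 : piRow t (z.val / c) (z.val % c) + (z.val / c) * c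
          = piRow t (w.val / c) (w.val % c) + (w.val / c) * c :=
        congrArg Fin.val hzw
      have hdiv : z.val / c = w.val / c := by
        have e1 : (piRow t (z.val / c) (z.val % c) + (z.val / c) * c) / c
            = z.val / c := by
          rw [Nat.add_mul_div_right _ _ hc, Nat.div_eq_of_lt (hpilt z), Nat.zero_add]
        have e2 : (piRow t (w.val / c) (w.val % c) + (w.val / c) * c) / c
            = w.val / c := by
          rw [Nat.add_mul_div_right _ _ hc, Nat.div_eq_of_lt (hpilt w), Nat.zero_add]
        rw [← e1, ← e2, h1]
      have hpi : piRow t (z.val / c) (z.val % c) = piRow t (w.val / c) (w.val % c) := by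
        have hmm : z.val / c * c = w.val / c * c := by rw [hdiv]
        omega
      rw [hdiv] at hpi
      have hmod : z.val % c = w.val % c :=
        piRow_inj t _ (hmodle z) (hmodle w) hpi
      have : z.val = w.val := by
        have hz := Nat.div_add_mod z.val c
        have hw := Nat.div_add_mod w.val c
        have a1 : c * (z.val / c) = z.val / c * c := Nat.mul_comm _ _
        have a2 : c * (w.val / c) = w.val / c * c := Nat.mul_comm _ _
        have hmm : z.val / c * c = w.val / c * c := by rw [hdiv]
        omega
      exact ZMod.val_injective n this
    have hbij : Function.Bijective f :=
      (Fintype.bijective_iff_injective_and_card f).mpr ⟨hinj, by simp⟩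
    refine ⟨(2 * k + 1) * (k * c + t + 1), Nat.mul_pos (by omega) (by omega),
      Equiv.ofBijective f hbij, ?_⟩
    intro x
    set r0 := x.val % c with hr0def
    have hr0 : r0 < c := Nat.mod_lt _ hc
    have hvq : ∀ q, q < 2 * k + 1 → ((q * c + r0 : ℕ) : ZMod n).val = q * c + r0 := by
      intro q hq
      apply ZMod.val_cast_of_lt
      have h1 : q * c + r0 < (q + 1) * c := by
        have : (q + 1) * c = q * c + c := by ring
        omega
      have h2 : (q + 1) * c ≤ (2 * k + 1) * c := Nat.mul_le_mul_right c hq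
      omega
    have himg : insert x ((circulantGraph (circJumps n c k)).neighborFinset x)
        = (Finset.range (2 * k + 1)).image (fun q => ((q * c + r0 : ℕ) : ZMod n)) := by
      ext y
      rw [mem_closed_nbhd hk hc hn, Finset.mem_image]
      constructor
      · intro h
        refine ⟨y.val / c, Finset.mem_range.mpr ?_, ?_⟩
        · rw [Nat.div_lt_iff_lt_mul hc, ← hn]; exact ZMod.val_lt y
        · have : y.val / c * c + r0 = y.val := by
            have hz := Nat.div_add_mod y.val c
            have a1 : c * (y.val / c) = y.val / c * c := Nat.mul_comm _ _
            omega
          rw [this, natCast_val_self]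
      · rintro ⟨q, hq, rfl⟩
        rw [Finset.mem_range] at hq
        rw [hvq q hq, show q * c + r0 = r0 + q * c by ring,
          Nat.add_mul_mod_self_right]
        exact Nat.mod_eq_of_lt hr0
    rw [himg]
    rw [Finset.sum_image]
    · have hterm : ∀ q ∈ Finset.range (2 * k + 1),
          ((Equiv.ofBijective f hbij ((q * c + r0 : ℕ) : ZMod n) : ℕ) + 1)
          = piRow t q r0 + q * c + 1 := by
        intro q hq
        rw [Finset.mem_range] at hq
        have hval := hvq q hq
        have hdiv : ((q * c + r0 : ℕ) : ZMod n).val / c = q := by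
          rw [hval]
          rw [show q * c + r0 = r0 + q * c by ring,
            Nat.add_mul_div_right _ _ hc, Nat.div_eq_of_lt hr0, Nat.zero_add]
        have hmod : ((q * c + r0 : ℕ) : ZMod n).val % c = r0 := by
          rw [hval, show q * c + r0 = r0 + q * c by ring,
            Nat.add_mul_mod_self_right]
          exact Nat.mod_eq_of_lt hr0
        show (f ((q * c + r0 : ℕ) : ZMod n) : ℕ) + 1 = piRow t q r0 + q * c + 1
        rw [hfval, hdiv, hmod]
      rw [Finset.sum_congr rfl hterm]
      have e1 : ∑ q ∈ Finset.range (2 * k + 1), (piRow t q r0 + q * c + 1)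
          = (∑ q ∈ Finset.range (2 * k + 1), piRow t q r0)
            + (∑ q ∈ Finset.range (2 * k + 1), q) * c + (2 * k + 1) := by
        rw [Finset.sum_add_distrib, Finset.sum_add_distrib, Finset.sum_const,
          Finset.card_range, Finset.sum_mul]
        simp [Finset.sum_mul]
      rw [e1, piRow_sum t k r0 hk (by omega), hsum_range]
      ring
    · intro a ha b hb hab
      rw [Finset.mem_coe, Finset.mem_range] at ha hb
      have h1 : a * c + r0 = b * c + r0 := by
        have := congrArg ZMod.val hab
        rw [hvq a ha, hvq b hb] at this
        exact this
      have : a * c = b * c := by omega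
      exact Nat.eq_of_mul_eq_mul_right hc this
end

section
/- For every integer k ≥ 2, the equation ∑_{s=1}^{k−1} cos(sx) + cos((k+1)x) = −1/2 has exactly 2k+2 solutions in [−π, π], namely x = ±2jπ/(2k+1) for j ∈ {1,...,k}, together with x = ±π/3. -/
open Finset Real

-- telescoping
lemma tele (x : ℝ) : ∀ n : ℕ, 2 * Real.sin (x/2) * ∑ s ∈ Finset.Icc 1 n, Real.cos (s * x)
    = Real.sin ((n + 1/2) * x) - Real.sin (x/2)
  | 0 => by norm_num [show (1:ℝ)/2*x = x/2 by ring]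
  | n+1 => by
    rw [Finset.sum_Icc_succ_top (by omega), mul_add, tele x n]
    push_cast
    rw [show ((n:ℝ)+1+1/2)*x = ((n:ℝ)+1)*x + x/2 by ring,
        show ((n:ℝ)+1/2)*x = ((n:ℝ)+1)*x - x/2 by ring,
        Real.sin_add, Real.sin_sub]
    ring

lemma key2 (y z : ℝ) : Real.sin (z - 2*y) + 2*Real.sin y * Real.cos (z + y)
    = Real.sin z * (2 * Real.cos (2*y) - 1) := by
  rw [Real.sin_sub, Real.cos_add, Real.cos_two_mul', Real.sin_two_mul]
  linear_combination (-(Real.sin z)) * Real.sin_sq_add_cos_sq y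

lemma key (k : ℕ) (hk : 2 ≤ k) (x : ℝ) :
    2 * Real.sin (x/2) * (∑ s ∈ Finset.Icc 1 (k-1), Real.cos (s*x) + Real.cos (((k:ℝ)+1)*x) + 1/2)
      = Real.sin ((2*(k:ℝ)+1)*(x/2)) * (2 * Real.cos x - 1) := by
  have h := tele x (k-1)
  have hk1 : ((k-1:ℕ):ℝ) = (k:ℝ) - 1 := by
    rw [Nat.cast_sub (by omega), Nat.cast_one]
  rw [hk1] at h
  have h2 := key2 (x/2) ((2*(k:ℝ)+1)*(x/2))
  rw [show (2*(k:ℝ)+1)*(x/2) - 2*(x/2) = ((k:ℝ)-1+1/2)*x by ring,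
      show (2*(k:ℝ)+1)*(x/2) + x/2 = ((k:ℝ)+1)*x by ring,
      show 2*(x/2) = x by ring] at h2
  rw [mul_add, mul_add, h]
  linear_combination h2

lemma solves (k : ℕ) (hk : 2 ≤ k) (x : ℝ) (hs : Real.sin (x/2) ≠ 0)
    (h0 : Real.sin ((2*(k:ℝ)+1)*(x/2)) * (2 * Real.cos x - 1) = 0) :
    ∑ s ∈ Finset.Icc 1 (k-1), Real.cos (s*x) + Real.cos (((k:ℝ)+1)*x) = -1/2 := by
  have h := key k hk x
  rw [h0] at h
  rcases mul_eq_zero.mp h with h1 | h1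
  · exact absurd (by linarith) hs
  · linarith

theorem stmt_18 (k : ℕ) (hk : 2 ≤ k) :
    {x : ℝ | x ∈ Set.Icc (-π) π ∧
        ∑ s ∈ Finset.Icc 1 (k - 1), Real.cos (s * x) + Real.cos ((k + 1) * x) = -1/2} =
      {x : ℝ | ∃ j : ℕ, 1 ≤ j ∧ j ≤ k ∧
          (x = 2 * j * π / (2 * k + 1) ∨ x = -(2 * j * π / (2 * k + 1)))} ∪
        {π / 3, -(π / 3)} := by
  have hπ := Real.pi_pos
  have h2k : (0:ℝ) < 2*(k:ℝ)+1 := by positivity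
  ext x
  simp only [Set.mem_setOf_eq, Set.mem_union, Set.mem_insert_iff, Set.mem_singleton_iff,
    Set.mem_Icc]
  constructor
  · rintro ⟨⟨hx1, hx2⟩, heq⟩
    have hx0 : x ≠ 0 := by
      rintro rfl
      simp only [mul_zero, Real.cos_zero, Finset.sum_const, nsmul_eq_mul, mul_one,
        Nat.card_Icc] at heq
      have : ((k - 1 + 1 - 1 : ℕ) : ℝ) = (k:ℝ) - 1 := by
        rw [show k - 1 + 1 - 1 = k - 1 from by omega, Nat.cast_sub (by omega), Nat.cast_one]
      rw [this] at heq
      have : (2:ℝ) ≤ (k:ℝ) := by exact_mod_cast hk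
      linarith
    have hs : Real.sin (x/2) ≠ 0 := by
      intro h
      have := (Real.sin_eq_zero_iff_of_lt_of_lt (by linarith) (by linarith)).mp h
      exact hx0 (by linarith)
    have h0 : Real.sin ((2*(k:ℝ)+1)*(x/2)) * (2 * Real.cos x - 1) = 0 := by
      rw [← key k hk x, heq]; ring
    rcases mul_eq_zero.mp h0 with h1 | h1
    · obtain ⟨m, hm⟩ := Real.sin_eq_zero_iff.mp h1
      have hxm : x = 2*(m:ℝ)*π/(2*(k:ℝ)+1) := by
        field_simp
        linarith
      have hm0 : m ≠ 0 := by
        rintro rfl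
        norm_num at hxm
        exact hx0 hxm
      have hmk : 2*m ≤ 2*(k:ℤ)+1 ∧ -(2*(k:ℤ)+1) ≤ 2*m := by
        constructor
        · have : 2*(m:ℝ)*π ≤ (2*(k:ℝ)+1)*π := by
            rw [hxm] at hx2
            calc 2*(m:ℝ)*π = (2*(m:ℝ)*π/(2*(k:ℝ)+1)) * (2*(k:ℝ)+1) := by field_simp
            _ ≤ π * (2*(k:ℝ)+1) := by apply mul_le_mul_of_nonneg_right hx2; linarith
            _ = (2*(k:ℝ)+1)*π := by ring
          have := le_of_mul_le_mul_right (by linarith : (2*(m:ℝ))*π ≤ (2*(k:ℝ)+1)*π) hπ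
          exact_mod_cast this
        · have : -((2*(k:ℝ)+1))*π ≤ 2*(m:ℝ)*π := by
            rw [hxm] at hx1
            calc -((2*(k:ℝ)+1))*π = (-π) * (2*(k:ℝ)+1) := by ring
            _ ≤ (2*(m:ℝ)*π/(2*(k:ℝ)+1)) * (2*(k:ℝ)+1) := by
                apply mul_le_mul_of_nonneg_right hx1; linarith
            _ = 2*(m:ℝ)*π := by field_simp
          have := le_of_mul_le_mul_right (by linarith : (-(2*(k:ℝ)+1))*π ≤ (2*(m:ℝ))*π) hπ
          exact_mod_cast this
      left
      rcases lt_or_gt_of_ne hm0 with hneg | hpos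
      · refine ⟨(-m).toNat, by omega, by omega, Or.inr ?_⟩
        rw [hxm]
        have : (((-m).toNat : ℕ) : ℝ) = -(m:ℝ) := by
          rw [show ((-m).toNat : ℝ) = ((-m : ℤ) : ℝ) from by exact_mod_cast Int.toNat_of_nonneg (by omega)]
          push_cast; ring
        rw [this]; ring
      · refine ⟨m.toNat, by omega, by omega, Or.inl ?_⟩
        rw [hxm]
        have : ((m.toNat : ℕ) : ℝ) = (m:ℝ) := by exact_mod_cast Int.toNat_of_nonneg (by omega)
        rw [this]
    · -- cos x = 1/2
      right
      have hcos : Real.cos x = Real.cos (π/3) := by rw [Real.cos_pi_div_three]; linarith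
      rcases le_or_gt 0 x with hx0' | hx0'
      · left
        exact Real.injOn_cos ⟨hx0', hx2⟩ ⟨by positivity, by linarith⟩ hcos
      · right
        have : -x = π/3 := by
          apply Real.injOn_cos ⟨by linarith, by linarith⟩ ⟨by positivity, by linarith⟩
          rw [Real.cos_neg, hcos]
        linarith
  · rintro (⟨j, hj1, hj2, hj3 | hj3⟩ | h | h)
    · have hj2' : (j:ℝ) ≤ (k:ℝ) := by exact_mod_cast hj2
      have hj1' : (1:ℝ) ≤ (j:ℝ) := by exact_mod_cast hj1
      have hxpos : 0 < x := by rw [hj3]; positivity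
      have hxle : x ≤ π := by
        rw [hj3, div_le_iff₀ h2k]
        nlinarith
      refine ⟨⟨by linarith, hxle⟩, ?_⟩
      apply solves k hk x
      · exact ne_of_gt (Real.sin_pos_of_pos_of_lt_pi (by linarith) (by linarith))
      · have : (2*(k:ℝ)+1)*(x/2) = (j:ℤ)*π := by
          rw [hj3]; push_cast; field_simp
        rw [this, Real.sin_int_mul_pi]; ring
    · have hj2' : (j:ℝ) ≤ (k:ℝ) := by exact_mod_cast hj2
      have hj1' : (1:ℝ) ≤ (j:ℝ) := by exact_mod_cast hj1
      have hy : 0 < 2 * (j:ℝ) * π / (2*(k:ℝ)+1) := by positivity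
      have hyle : 2 * (j:ℝ) * π / (2*(k:ℝ)+1) ≤ π := by
        rw [div_le_iff₀ h2k]; nlinarith
      refine ⟨⟨by rw [hj3]; linarith, by rw [hj3]; linarith⟩, ?_⟩
      apply solves k hk x
      · rw [hj3]
        have : -(2 * (j:ℝ) * π / (2*(k:ℝ)+1)) / 2 = -(2 * (j:ℝ) * π / (2*(k:ℝ)+1) / 2) := by ring
        rw [this, Real.sin_neg]
        simp only [neg_ne_zero]
        exact ne_of_gt (Real.sin_pos_of_pos_of_lt_pi (by linarith) (by linarith))
      · have : (2*(k:ℝ)+1)*(x/2) = (-(j:ℤ))*π := by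
          rw [hj3]; push_cast; field_simp
        rw [this, neg_mul, Real.sin_neg, Real.sin_int_mul_pi]; ring
    · refine ⟨⟨by rw [h]; linarith, by rw [h]; linarith⟩, ?_⟩
      apply solves k hk x
      · rw [h]
        exact ne_of_gt (Real.sin_pos_of_pos_of_lt_pi (by linarith) (by linarith))
      · rw [h, Real.cos_pi_div_three]; ring
    · refine ⟨⟨by rw [h]; linarith, by rw [h]; linarith⟩, ?_⟩
      apply solves k hk x
      · rw [h]
        rw [show -(π/3)/2 = -(π/3/2) by ring, Real.sin_neg]
        simp only [neg_ne_zero]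
        exact ne_of_gt (Real.sin_pos_of_pos_of_lt_pi (by linarith) (by linarith))
      · rw [h, Real.cos_neg, Real.cos_pi_div_three]; ring
end
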